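/- For every n ≥ 2, the subgroup of B(n) generated by the images of a₁ and a_{n+1} is a free group of rank two; equivalently, the homomorphism from the free group on two generators to B(n) sending the generators to a₁ and a_{n+1} is injective. -/

import Mathlib

/-- The relators of the presentation `ℬ(n)` with generators `a₁, …, a_{n+1}`
(indexed by `Fin (n+1)`): for `1 ≤ i ≤ n`, the word `a_{i+1}⁻¹ a_i a_{i+1} a_i⁻²`. -/
def Brels (n : ℕ) : Set (FreeGroup (Fin (n + 1))) :=
  {r | ∃ i : Fin n, r =
    (FreeGroup.of i.succ)⁻¹ * FreeGroup.of i.castSucc * FreeGroup.of i.succ *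
      (FreeGroup.of i.castSucc ^ 2)⁻¹}


open Subgroup HNNExtension Multiplicative

section Sq

variable {G : Type*} [Group G]

theorem commute_of_mem_zpowers {g a b : G} (ha : a ∈ zpowers g) (hb : b ∈ zpowers g) :
    Commute a b := by
  obtain ⟨m, rfl⟩ := mem_zpowers_iff.1 ha
  obtain ⟨k, rfl⟩ := mem_zpowers_iff.1 hb
  exact (Commute.refl g).zpow_zpow m k

/-- The squaring homomorphism from `zpowers g` to `zpowers (g ^ 2)`. -/
def sqHom (g : G) : zpowers g →* zpowers (g ^ 2) :=
  MonoidHom.mk' (fun x => ⟨(x : G) ^ 2, by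
      obtain ⟨k, hk⟩ := mem_zpowers_iff.1 x.2
      exact mem_zpowers_iff.2 ⟨k, by rw [← hk]; group⟩⟩)
    (fun a b => by
      ext
      exact (commute_of_mem_zpowers a.2 b.2).mul_pow 2)

theorem sqHom_bijective (g : G) (hg : ¬ IsOfFinOrder g) : Function.Bijective (sqHom g) := by
  constructor
  · intro a b hab
    obtain ⟨m, hm⟩ := mem_zpowers_iff.1 a.2
    obtain ⟨k, hk⟩ := mem_zpowers_iff.1 b.2
    have h1 : ((a : G)) ^ 2 = ((b : G)) ^ 2 := congrArg Subtype.val hab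
    rw [← hm, ← hk] at h1
    have h2 : g ^ (m * 2) = g ^ (k * 2) := by
      rw [zpow_mul, zpow_mul]; exact_mod_cast h1
    have h3 : m * 2 = k * 2 := injective_zpow_iff_not_isOfFinOrder.2 hg h2
    have : m = k := by omega
    subst this
    ext
    rw [← hm, ← hk]
  · rintro ⟨y, hy⟩
    obtain ⟨k, rfl⟩ := mem_zpowers_iff.1 hy
    refine ⟨⟨g ^ k, mem_zpowers_iff.2 ⟨k, rfl⟩⟩, ?_⟩
    ext
    show (g ^ k) ^ 2 = (g ^ 2) ^ k
    group

/-- For `g` of infinite order, squaring gives an isomorphism `zpowers g ≃* zpowers (g ^ 2)`. -/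
noncomputable def sqEquiv (g : G) (hg : ¬ IsOfFinOrder g) : zpowers g ≃* zpowers (g ^ 2) :=
  MulEquiv.ofBijective (sqHom g) (sqHom_bijective g hg)

@[simp] theorem sqEquiv_apply (g : G) (hg : ¬ IsOfFinOrder g) (x : zpowers g) :
    (sqEquiv g hg x : G) = (x : G) ^ 2 := rfl

end Sq

section ExpSum

variable {G : Type*} [Group G] {A B : Subgroup G} {φ : A ≃* B}

/-- Exponent sum of the stable letter in an HNN extension. -/
def esum : HNNExtension G A B φ →* Multiplicative ℤ :=
  HNNExtension.lift 1 (ofAdd 1) (fun a => by simp)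

@[simp] theorem esum_t : (esum : HNNExtension G A B φ →* Multiplicative ℤ) t = ofAdd 1 :=
  HNNExtension.lift_t _ _ _

@[simp] theorem esum_of (x : G) :
    (esum : HNNExtension G A B φ →* Multiplicative ℤ) (of x) = 1 :=
  HNNExtension.lift_of _ _ _ _

theorem not_isOfFinOrder_of_hom {H : Type*} [Group H] (f : H →* Multiplicative ℤ) {x : H}
    (h : f x ≠ 1) : ¬ IsOfFinOrder x := by
  intro hx
  obtain ⟨n, hn, h1⟩ := isOfFinOrder_iff_pow_eq_one.1 hx
  apply h
  have h2 : (f x) ^ n = 1 := by rw [← map_pow, h1, map_one]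
  have h3 : n • (f x).toAdd = 0 := by
    have := congrArg Multiplicative.toAdd h2
    simpa using this
  have hne : (n : ℤ) ≠ 0 := by exact_mod_cast hn.ne'
  have h4 : (f x).toAdd = 0 := by
    simp only [nsmul_eq_mul] at h3
    rcases mul_eq_zero.1 h3 with h | h
    · exact absurd h hne
    · exact h
  have : f x = ofAdd 0 := by
    rw [← h4]; simp
  simpa using this

theorem t_not_isOfFinOrder : ¬ IsOfFinOrder (t : HNNExtension G A B φ) :=
  not_isOfFinOrder_of_hom esum (by simp)

end ExpSum

section Tower

/-- A stage of the tower of HNN extensions: a group together with a distinguished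
element `top` (the last generator) of infinite order. -/
structure TW : Type 1 where
  G : Type
  grp : Group G
  top : G
  topInf : ¬ IsOfFinOrder top

attribute [instance] TW.grp

theorem freeGroup_of_not_isOfFinOrder : ¬ IsOfFinOrder (FreeGroup.of () : FreeGroup Unit) :=
  not_isOfFinOrder_of_hom (FreeGroup.lift (fun _ => ofAdd (1 : ℤ)))
    (by rw [FreeGroup.lift_apply_of]; simp)

/-- The next stage of the tower: the HNN extension conjugating `top` to `top ^ 2`. -/
noncomputable def TW.next (p : TW) : TW where
  G := HNNExtension p.G (zpowers (p.top ^ 2)) (zpowers p.top) (sqEquiv p.top p.topInf).symm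
  grp := inferInstance
  top := t
  topInf := t_not_isOfFinOrder

/-- The tower of iterated HNN extensions: `tw k` models the group generated by
`a₁, …, a_{k+1}` subject to the relations of `ℬ`. -/
noncomputable def tw : ℕ → TW
  | 0 => ⟨FreeGroup Unit, inferInstance, FreeGroup.of (), freeGroup_of_not_isOfFinOrder⟩
  | k + 1 => (tw k).next

noncomputable abbrev twA (k : ℕ) : Subgroup (tw k).G := zpowers ((tw k).top ^ 2)
noncomputable abbrev twB (k : ℕ) : Subgroup (tw k).G := zpowers ((tw k).top)
noncomputable abbrev twφ (k : ℕ) : twA k ≃* twB k := (sqEquiv (tw k).top (tw k).topInf).symm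
noncomputable abbrev twH (k : ℕ) : Type := HNNExtension (tw k).G (twA k) (twB k) (twφ k)

theorem twG_succ (k : ℕ) : (tw (k + 1)).G = twH k := rfl

theorem top_succ (k : ℕ) : (tw (k + 1)).top = (t : twH k) := rfl

/-- The images of the generators `a_{i+1}` in each stage of the tower. -/
noncomputable def emb : (k : ℕ) → ℕ → (tw k).G
  | 0, _ => FreeGroup.of ()
  | k + 1, i => if i = k + 1 then (t : twH k) else
      (HNNExtension.of (emb k i) : twH k)

theorem emb_self (k : ℕ) : emb k k = (tw k).top := by
  cases k with
  | zero => rfl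
  | succ k => simp [emb]; rfl

theorem emb_succ_self (k : ℕ) : emb (k + 1) (k + 1) = (t : twH k) := by
  simp [emb]; rfl

theorem emb_succ_of (k i : ℕ) (h : i ≤ k) :
    emb (k + 1) i = (HNNExtension.of (emb k i) : twH k) := by
  have : i ≠ k + 1 := by omega
  simp [emb, this]; rfl

theorem tw_conj (k : ℕ) :
    (t : twH k)⁻¹ * HNNExtension.of (tw k).top * t = HNNExtension.of (tw k).top ^ 2 := by
  have h := HNNExtension.equiv_symm_eq_conj (φ := twφ k)
    ⟨(tw k).top, mem_zpowers _⟩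
  have h2 : (twφ k).symm = sqEquiv (tw k).top (tw k).topInf := MulEquiv.symm_symm _
  rw [h2] at h
  rw [← map_pow]
  exact h.symm

theorem emb_rel : ∀ (k i : ℕ), i < k →
    (emb k (i + 1))⁻¹ * emb k i * emb k (i + 1) = (emb k i) ^ 2 := by
  intro k
  induction k with
  | zero => omega
  | succ k ih =>
    intro i hi
    rcases Nat.lt_or_ge i k with h | h
    · rw [emb_succ_of k i (by omega), emb_succ_of k (i+1) (by omega)]
      have h2 := congrArg (fun x : (tw k).G => (HNNExtension.of x : twH k)) (ih i h)
      simp only [map_mul, map_inv, map_pow] at h2; exact h2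
    · have hik : i = k := by omega
      subst hik
      rw [emb_succ_self, emb_succ_of i i le_rfl, emb_self]
      exact tw_conj i

theorem emb_zero_not_isOfFinOrder : ∀ k : ℕ, ¬ IsOfFinOrder (emb k 0) := by
  intro k
  induction k with
  | zero => exact freeGroup_of_not_isOfFinOrder
  | succ k ih =>
    rw [emb_succ_of k 0 (Nat.zero_le _)]
    intro (h : IsOfFinOrder (HNNExtension.of (emb k 0) : twH k))
    refine ih ?_
    rw [← orderOf_pos_iff] at h ⊢
    have horder := orderOf_injective (HNNExtension.of : (tw k).G →* twH k)
      (HNNExtension.of_injective (φ := twφ k)) (emb k 0)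
    rwa [horder] at h

/-- In `tw (k+1)` no nontrivial power of `a₁` lies in the cyclic subgroup
generated by the last generator. -/
theorem emb_zero_zpow_notMem (k : ℕ) (m : ℤ)
    (hm : emb (k+1) 0 ^ m ∈ zpowers ((tw (k+1)).top)) : m = 0 := by
  obtain ⟨j, hj⟩ := mem_zpowers_iff.1 hm
  rw [top_succ, emb_succ_of k 0 (Nat.zero_le _)] at hj
  replace hj : (t : twH k) ^ j = HNNExtension.of (emb k 0) ^ m := hj
  have h1 := congrArg (⇑(esum (φ := twφ k))) hj
  rw [map_zpow, map_zpow, esum_t, esum_of, one_zpow] at h1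
  have hj0 : j = 0 := by
    have : ofAdd (j : ℤ) = ofAdd 0 := by
      simpa [← ofAdd_zsmul] using h1
    simpa using this
  rw [hj0, zpow_zero] at hj
  have h2 : emb k 0 ^ m = 1 := by
    apply HNNExtension.of_injective (G := (tw k).G) (A := twA k) (B := twB k) (φ := twφ k)
    rw [map_zpow, map_one]
    exact hj.symm
  have h4 := injective_zpow_iff_not_isOfFinOrder.2 (emb_zero_not_isOfFinOrder k)
  have h3 : emb k 0 ^ m = emb k 0 ^ (0 : ℤ) := by simpa using h2
  exact h4 h3

end Tower

section Parse

/-- Reducedness relation on adjacent letters of a free-group word: the second letter is not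
the inverse of the first. -/
def Rred {α : Type*} (a c : α × Bool) : Prop := ¬(a.1 = c.1 ∧ c.2 = !a.2)

theorem chain'_of_no_infix {α : Type*} (R : α → α → Prop) :
    ∀ L : List α, (∀ (L₁ L₂ : List α) (a c : α), L = L₁ ++ a :: c :: L₂ → R a c) →
      List.Chain' R L
  | [] , _ => List.isChain_nil
  | [_], _ => List.isChain_singleton _
  | a :: c :: L, h =>
    List.IsChain.cons_cons (h [] L a c rfl)
      (chain'_of_no_infix R (c :: L) (fun L₁ L₂ x y hh => h (a :: L₁) L₂ x y (by simp [hh])))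

theorem chain'_toWord {α : Type*} [DecidableEq α] (w : FreeGroup α) :
    List.Chain' Rred w.toWord := by
  apply chain'_of_no_infix
  rintro L₁ L₂ ⟨x, b⟩ ⟨y, b'⟩ hw
  by_contra hr
  rw [Rred, not_not] at hr
  obtain ⟨h1, h2⟩ := hr
  dsimp only at h1 h2
  subst h1; subst h2
  exact FreeGroup.reduce.not (p := False)
    (by rw [FreeGroup.reduce_toWord w]; exact hw)

/-- Parse a word in `x, y` (with `true ↦ x`, `false ↦ y`) into the exponent of the leading
power of `x` together with a list of pairs `(u, m)` representing `y^u * x^m`. -/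
def parseW : List (Bool × Bool) → ℤ × List (ℤˣ × ℤ)
  | [] => (0, [])
  | (true, s) :: l => ((if s then 1 else -1) + (parseW l).1, (parseW l).2)
  | (false, s) :: l => (0, ((if s then (1 : ℤˣ) else -1), (parseW l).1) :: (parseW l).2)

theorem parseW_sign : ∀ (l : List (Bool × Bool)), List.Chain' Rred l →
    ∀ s l', l = (true, s) :: l' → 0 < (if s then (1:ℤ) else -1) * (parseW l).1 := by
  intro l
  induction l with
  | nil => intro _ s l' h; cases h
  | cons a l ih =>
    intro hc s l' he
    injection he with h1 h2
    subst h1; subst h2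
    cases l with
    | nil => cases s <;> simp [parseW]
    | cons c l'' =>
      obtain ⟨b2, s'⟩ := c
      cases b2 with
      | true =>
        have hr : Rred (true, s) (true, s') := (List.isChain_cons_cons.1 hc).1
        have hs : s = s' := by cases s <;> cases s' <;> simp_all [Rred]
        cases hs
        have hpos := ih (List.isChain_cons_cons.1 hc).2 s l'' rfl
        show 0 < (if s then (1:ℤ) else -1) * ((if s then 1 else -1) + (parseW ((true, s) :: l'')).1)
        cases s <;> norm_num at hpos ⊢ <;> nlinarith
      | false =>
        show 0 < (if s then (1:ℤ) else -1) * ((if s then 1 else -1) + (parseW ((false, s') :: l'')).1)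
        have h0 : (parseW ((false, s') :: l'')).1 = 0 := rfl
        rw [h0, add_zero]
        cases s <;> norm_num

theorem parseW_head_false : ∀ (l : List (Bool × Bool)), List.Chain' Rred l →
    (parseW l).1 = 0 → l = [] ∨ ∃ s l', l = (false, s) :: l' := by
  intro l hc h0
  match l with
  | [] => exact Or.inl rfl
  | (false, s) :: l' => exact Or.inr ⟨s, l', rfl⟩
  | (true, s) :: l' =>
    have := parseW_sign _ hc s l' rfl
    rw [h0, mul_zero] at this
    omega

theorem parseW_chain : ∀ (l : List (Bool × Bool)), List.Chain' Rred l →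
    List.Chain' (fun p q : ℤˣ × ℤ => p.2 = 0 → p.1 = q.1) (parseW l).2 := by
  intro l
  induction l with
  | nil => intro _; exact List.isChain_nil
  | cons a l ih =>
    intro hc
    have hcl : List.Chain' Rred l := hc.tail
    obtain ⟨b, s⟩ := a
    cases b with
    | true =>
      show List.Chain' _ (parseW l).2
      exact ih hcl
    | false =>
      show List.IsChain _ (((if s then (1 : ℤˣ) else -1), (parseW l).1) :: (parseW l).2)
      rw [List.isChain_cons]
      refine ⟨?_, ih hcl⟩
      intro q hq hm
      rcases parseW_head_false l hcl hm with rfl | ⟨s', l', rfl⟩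
      · simp [parseW] at hq
      · have hq2 : q = ((if s' then (1 : ℤˣ) else -1), (parseW l').1) := by
          have : (parseW ((false, s') :: l')).2
              = ((if s' then (1 : ℤˣ) else -1), (parseW l').1) :: (parseW l').2 := rfl
          rw [this] at hq
          exact (show _ = q by simpa using hq).symm
        have hr : Rred (false, s) (false, s') := (List.isChain_cons_cons.1 hc).1
        have hs : s = s' := by
          cases s <;> cases s' <;> simp_all [Rred]
        cases hs
        rw [hq2]

end Parse

section FreePair

variable {G : Type*} [Group G] {A B : Subgroup G} {φ : A ≃* B}

theorem parseW_prod (F : G) :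
    ∀ l : List (Bool × Bool),
      FreeGroup.lift (fun b : Bool => if b then (of F : HNNExtension G A B φ) else t)
          (FreeGroup.mk l)
        = of (F ^ (parseW l).1) *
          ((parseW l).2.map (fun p => t ^ ((p.1 : ℤˣ) : ℤ) * of (F ^ p.2))).prod := by
  set f' : Bool → HNNExtension G A B φ := (fun b : Bool => if b then of F else t) with hf'
  intro l
  induction l with
  | nil => simp [parseW, FreeGroup.lift_mk]
  | cons a l ih =>
    obtain ⟨b, s⟩ := a
    have key : FreeGroup.lift f' (FreeGroup.mk ((b, s) :: l))
        = (bif s then f' b else (f' b)⁻¹) * FreeGroup.lift f' (FreeGroup.mk l) := by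
      rw [FreeGroup.lift_mk, FreeGroup.lift_mk, List.map_cons, List.prod_cons]
    rw [key, ih]
    cases b with
    | true =>
      have hfb : f' true = of F := by rw [hf']; simp
      have hp1 : (parseW ((true, s) :: l)).1 = (if s then 1 else -1) + (parseW l).1 := rfl
      have hp2 : (parseW ((true, s) :: l)).2 = (parseW l).2 := rfl
      rw [hp1, hp2, zpow_add, map_mul, mul_assoc, hfb]
      cases s with
      | true => simp
      | false => simp
    | false =>
      have hfb : f' false = t := by rw [hf']; simp
      have hp1 : (parseW ((false, s) :: l)).1 = 0 := rfl
      have hp2 : (parseW ((false, s) :: l)).2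
          = ((if s then (1 : ℤˣ) else -1), (parseW l).1) :: (parseW l).2 := rfl
      rw [hp1, hp2, List.map_cons, List.prod_cons, hfb]
      cases s with
      | true => simp [mul_assoc]
      | false => simp [mul_assoc]

/-- The key freeness lemma: if `F ∈ G` has infinite order and no nontrivial power of `F`
lies in `A` or in `B`, then `F` and the stable letter `t` generate a free subgroup of rank
two of the HNN extension. -/
theorem free_pair (F : G) (hF : ¬ IsOfFinOrder F)
    (hA : ∀ m : ℤ, F ^ m ∈ A → m = 0) (hB : ∀ m : ℤ, F ^ m ∈ B → m = 0) :
    Function.Injective (FreeGroup.lift (fun b : Bool =>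
      if b then (of F : HNNExtension G A B φ) else t)) := by
  rw [injective_iff_map_eq_one]
  intro w hw
  by_contra hw0
  have hchain : List.Chain' Rred w.toWord := chain'_toWord w
  have hmk : FreeGroup.mk w.toWord = w := FreeGroup.mk_toWord
  have hln : w.toWord ≠ [] := fun h => hw0 (FreeGroup.toWord_eq_nil_iff.1 h)
  have hprod := parseW_prod (φ := φ) F w.toWord
  rw [hmk, hw] at hprod
  cases hsnd : (parseW w.toWord).2 with
  | nil =>
    rw [hsnd] at hprod
    simp only [List.map_nil, List.prod_nil, mul_one] at hprod
    have hFm : F ^ (parseW w.toWord).1 = 1 :=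
      HNNExtension.of_injective (φ := φ) (by rw [← hprod, map_one])
    have hm0 : (parseW w.toWord).1 = 0 :=
      injective_zpow_iff_not_isOfFinOrder.2 hF (by simpa using hFm)
    obtain ⟨⟨b, s⟩, l', hl'⟩ : ∃ a l', w.toWord = a :: l' := by
      cases h : w.toWord with
      | nil => exact absurd h hln
      | cons a l' => exact ⟨a, l', rfl⟩
    cases b with
    | false =>
      rw [hl'] at hsnd
      simp [parseW] at hsnd
    | true =>
      have := parseW_sign w.toWord hchain s l' hl'
      rw [hm0, mul_zero] at this
      omega
  | cons p ps =>
    have hch2 : List.IsChain (fun a b => a.2 ∈ toSubgroup A B a.1 → a.1 = b.1)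
        ((parseW w.toWord).2.map (fun p => ((p.1 : ℤˣ), F ^ p.2))) := by
      rw [List.isChain_map]
      refine (parseW_chain w.toWord hchain).imp ?_
      intro p q hpq hmem
      have hp2 : p.2 = 0 := by
        rcases Int.units_eq_one_or p.1 with h | h <;> rw [h] at hmem
        · exact hA _ (by simpa using hmem)
        · exact hB _ (by simpa using hmem)
      show p.1 = q.1
      exact hpq hp2
    set W : HNNExtension.NormalWord.ReducedWord G A B :=
      { head := F ^ (parseW w.toWord).1,
        toList := (parseW w.toWord).2.map (fun p => ((p.1 : ℤˣ), F ^ p.2)),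
        chain := hch2 } with hW
    have hWprod : W.prod φ = 1 := by
      rw [HNNExtension.NormalWord.ReducedWord.prod]
      show (HNNExtension.of (F ^ (parseW w.toWord).1) : HNNExtension G A B φ) *
        (((parseW w.toWord).2.map (fun p => ((p.1 : ℤˣ), F ^ p.2))).map
          (fun x : ℤˣ × G => t ^ ((x.1 : ℤˣ) : ℤ) * HNNExtension.of x.2)).prod = 1
      rw [List.map_map]
      exact hprod.symm
    have hnil := HNNExtension.ReducedWord.toList_eq_nil_of_mem_of_range φ W
      (by rw [hWprod]; exact one_mem _)
    rw [hW] at hnil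
    simp only [hsnd, List.map_cons] at hnil
    cases hnil

end FreePair

section Main

/-- `a₁` and `a_{k+3}` generate a free subgroup of rank 2 in the tower stage `tw (k+2)`. -/
theorem tower_free (k : ℕ) :
    Function.Injective (FreeGroup.lift (fun b : Bool =>
      if b then emb (k+2) 0 else emb (k+2) (k+2))) := by
  have h1 : (fun b : Bool => if b then emb (k+2) 0 else emb (k+2) (k+2))
      = (fun b : Bool => if b then (HNNExtension.of (emb (k+1) 0) : twH (k+1)) else t) := by
    funext b
    cases b with
    | true => simp [emb_succ_of (k+1) 0 (Nat.zero_le _)]; rfl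
    | false => simp [emb_succ_self (k+1)]; rfl
  rw [h1]
  refine free_pair (φ := twφ (k+1)) (emb (k+1) 0) (emb_zero_not_isOfFinOrder (k+1)) ?_ ?_
  · intro m hm
    refine emb_zero_zpow_notMem k m ?_
    have hle : twA (k+1) ≤ twB (k+1) :=
      zpowers_le.2 ((zpowers ((tw (k+1)).top)).pow_mem (mem_zpowers _) 2)
    exact hle hm
  · intro m hm
    exact emb_zero_zpow_notMem k m hm

theorem Brels_hold (n : ℕ) :
    ∀ r ∈ Brels n, FreeGroup.lift (fun i : Fin (n + 1) => emb n i.val) r = 1 := by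
  rintro r ⟨i, rfl⟩
  simp only [map_mul, map_inv, map_pow, FreeGroup.lift_apply_of, Fin.val_succ, Fin.coe_castSucc]
  rw [emb_rel n i.val i.isLt]
  simp

/-- The homomorphism from the free group on two generators to `B(n)` sending the two
generators to `a₁` and `a_{n+1}` is injective, i.e. `⟨a₁, a_{n+1}⟩ ≤ B(n)` is free of
rank two. -/
theorem stmt_6 (n : ℕ) (hn : 2 ≤ n) :
    Function.Injective (FreeGroup.lift (fun b : Bool =>
      if b then PresentedGroup.of (rels := Brels n) 0
      else PresentedGroup.of (rels := Brels n) (Fin.last n))) := by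
  obtain ⟨k, rfl⟩ : ∃ k, n = k + 2 := ⟨n - 2, by omega⟩
  set ψ : PresentedGroup (Brels (k+2)) →* (tw (k+2)).G :=
    PresentedGroup.toGroup (Brels_hold (k+2)) with hψ
  have hcomp : ψ.comp (FreeGroup.lift (fun b : Bool =>
        if b then PresentedGroup.of (rels := Brels (k+2)) 0
        else PresentedGroup.of (rels := Brels (k+2)) (Fin.last (k+2))))
      = FreeGroup.lift (fun b : Bool => if b then emb (k+2) 0 else emb (k+2) (k+2)) := by
    apply FreeGroup.ext_hom
    intro b
    cases b with
    | true =>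
      simp [hψ, PresentedGroup.toGroup.of]
    | false =>
      simp [hψ, PresentedGroup.toGroup.of]
  intro x y hxy
  apply tower_free k
  have h1 := DFunLike.congr_fun hcomp x
  have h2 := DFunLike.congr_fun hcomp y
  rw [← h1, ← h2]
  simp only [MonoidHom.comp_apply]
  rw [hxy]

end Main
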